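/- Let Q₃ denote the quotient of A⊗A⊗A (over ℂ) by the span of all elements s(x)a′⊗b′⊗c′−a′⊗t(x)b′⊗c′ and a′⊗s(x)b′⊗c′−a′⊗b′⊗t(x)c′ (x∈B), and assume Q₃ is non-degenerate for right multiplication in the first and in the third leg (if u∈Q₃ satisfies u·(c⊗1⊗1)=0 for all c∈A then u=0, and likewise for u·(1⊗1⊗c)). Then the canonical maps satisfy the following pentagon equations for all a,b,c∈A. For T̃ρ: choose representatives Σⱼuⱼ⊗vⱼ of T̃ρ(a⊗b), Σⱼₖpⱼₖ⊗qⱼₖ of T̃ρ(vⱼ⊗c) for each j, Σₗrₗ⊗sₗ of T̃ρ(b⊗c), Σₗₘdₗₘ⊗eₗₘ of T̃ρ(a⊗sₗ) for each l, and Σₗₘₙfₗₘₙ⊗gₗₘₙ of T̃ρ(dₗₘ⊗rₗ) for each l,m; then Σⱼₖ uⱼ⊗pⱼₖ⊗qⱼₖ = Σₗₘₙ fₗₘₙ⊗gₗₘₙ⊗eₗₘ in Q₃. For T̃λ: choose representatives Σⱼuⱼ⊗vⱼ of T̃λ(b⊗c), Σₗrₗ⊗sₗ of T̃λ(a⊗b),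 Σₗₘdₗₘ⊗eₗₘ of T̃λ(rₗ⊗c) for each l, and Σₗₘₙfₗₘₙ⊗gₗₘₙ of T̃λ(sₗ⊗eₗₘ) for each l,m; then Σⱼ (class of T̃λ(a⊗uⱼ) in legs 1,2)⊗vⱼ = Σₗₘₙ dₗₘ⊗fₗₘₙ⊗gₗₘₙ in Q₃. (All expressions are independent of the chosen representatives.) -/
import Mathlib


open scoped TensorProduct

noncomputable section

/-- A multiplier of a non-unital complex algebra `A`: a pair `T = (L, R)` of ℂ-linear maps
`A → A` satisfying `L (a*b) = L a * b`, `R (a*b) = a * R b` and `R a * b = a * L b`.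
We write `T a := L a` and `a T := R a`. -/
structure Mult (A : Type*) [NonUnitalRing A] [Module ℂ A]
    [SMulCommClass ℂ A A] [IsScalarTower ℂ A A] where
  L : A →ₗ[ℂ] A
  R : A →ₗ[ℂ] A
  hL : ∀ a b : A, L (a * b) = L a * b
  hR : ∀ a b : A, R (a * b) = a * R b
  hC : ∀ a b : A, R a * b = a * L b

namespace Mult

variable {A : Type*} [NonUnitalRing A] [Module ℂ A] [SMulCommClass ℂ A A] [IsScalarTower ℂ A A]

/-- Multiplication of multipliers: `(L,R)·(L′,R′) = (L∘L′, R′∘R)`. -/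
instance : Mul (Mult A) :=
  ⟨fun T U =>
    { L := T.L ∘ₗ U.L
      R := U.R ∘ₗ T.R
      hL := fun a b => by simp [U.hL, T.hL]
      hR := fun a b => by simp [T.hR, U.hR]
      hC := fun a b => by simp [U.hC, T.hC] }⟩

instance : Add (Mult A) :=
  ⟨fun T U =>
    { L := T.L + U.L
      R := T.R + U.R
      hL := fun a b => by simp [T.hL, U.hL, add_mul]
      hR := fun a b => by simp [T.hR, U.hR, mul_add]
      hC := fun a b => by simp [T.hC, U.hC, add_mul, mul_add] }⟩

instance : SMul ℂ (Mult A) :=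
  ⟨fun c T =>
    { L := c • T.L
      R := c • T.R
      hL := fun a b => by simp [T.hL, smul_mul_assoc]
      hR := fun a b => by simp [T.hR, mul_smul_comm]
      hC := fun a b => by simp [T.hC, smul_mul_assoc, mul_smul_comm] }⟩

end Mult

section Maps

variable {A : Type*} [NonUnitalRing A] [Module ℂ A] [SMulCommClass ℂ A A] [IsScalarTower ℂ A A]

/-- `w ↦ w · (c ⊗ 1)` on `A ⊗ A`. -/
def rmul₁ (c : A) : A ⊗[ℂ] A →ₗ[ℂ] A ⊗[ℂ] A :=
  TensorProduct.map (LinearMap.mulRight ℂ c) LinearMap.id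

/-- `w ↦ w · (1 ⊗ c)` on `A ⊗ A`. -/
def rmul₂ (c : A) : A ⊗[ℂ] A →ₗ[ℂ] A ⊗[ℂ] A :=
  TensorProduct.map LinearMap.id (LinearMap.mulRight ℂ c)

/-- `w ↦ (c ⊗ 1) · w` on `A ⊗ A`. -/
def lmul₁ (c : A) : A ⊗[ℂ] A →ₗ[ℂ] A ⊗[ℂ] A :=
  TensorProduct.map (LinearMap.mulLeft ℂ c) LinearMap.id

/-- `w ↦ (1 ⊗ c) · w` on `A ⊗ A`. -/
def lmul₂ (c : A) : A ⊗[ℂ] A →ₗ[ℂ] A ⊗[ℂ] A :=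
  TensorProduct.map LinearMap.id (LinearMap.mulLeft ℂ c)

/-- `b ↦ a ⊗ b`. -/
def tmulL (a : A) : A →ₗ[ℂ] A ⊗[ℂ] A := TensorProduct.mk ℂ A A a

/-- `a ↦ a ⊗ b`. -/
def tmulR (b : A) : A →ₗ[ℂ] A ⊗[ℂ] A := (TensorProduct.mk ℂ A A).flip b

/-- `(x ⊗ y) ⊗ v ↦ x ⊗ (y * v)`. -/
def mulIn23 : (A ⊗[ℂ] A) ⊗[ℂ] A →ₗ[ℂ] A ⊗[ℂ] A :=
  TensorProduct.map LinearMap.id (LinearMap.mul' ℂ A) ∘ₗ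
    (TensorProduct.assoc ℂ A A A).toLinearMap

/-- `(x ⊗ y) ⊗ v ↦ x ⊗ (v * y)`. -/
def mulIn23' : (A ⊗[ℂ] A) ⊗[ℂ] A →ₗ[ℂ] A ⊗[ℂ] A :=
  TensorProduct.map LinearMap.id
      (LinearMap.mul' ℂ A ∘ₗ (TensorProduct.comm ℂ A A).toLinearMap) ∘ₗ
    (TensorProduct.assoc ℂ A A A).toLinearMap

/-- `u ⊗ (x ⊗ y) ↦ (x * u) ⊗ y`. -/
def mulIn1 : A ⊗[ℂ] (A ⊗[ℂ] A) →ₗ[ℂ] A ⊗[ℂ] A :=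
  TensorProduct.map (LinearMap.mul' ℂ A) LinearMap.id ∘ₗ
    (TensorProduct.assoc ℂ A A A).symm.toLinearMap ∘ₗ
    (TensorProduct.leftComm ℂ A A A).toLinearMap

/-- `u ⊗ (x ⊗ y) ↦ (u * x) ⊗ y`. -/
def mulIn1' : A ⊗[ℂ] (A ⊗[ℂ] A) →ₗ[ℂ] A ⊗[ℂ] A :=
  TensorProduct.map (LinearMap.mul' ℂ A ∘ₗ (TensorProduct.comm ℂ A A).toLinearMap)
      LinearMap.id ∘ₗ
    (TensorProduct.assoc ℂ A A A).symm.toLinearMap ∘ₗ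
    (TensorProduct.leftComm ℂ A A A).toLinearMap

end Maps

/-- The basic data for a left multiplier bialgebroid: non-unital complex algebras `A`, `B`,
an algebra homomorphism `s : B → M(A)`, an algebra anti-homomorphism `t : B → M(A)` with
commuting images; `A` is idempotent and non-degenerate, `s`, `t` are faithful and the spans
of `s(B)A` and `t(B)A` equal `A`. -/
structure BaseData (A B : Type*) [NonUnitalRing A] [Module ℂ A] [SMulCommClass ℂ A A]
    [IsScalarTower ℂ A A] [NonUnitalRing B] [Module ℂ B] [SMulCommClass ℂ B B]
    [IsScalarTower ℂ B B] where
  s : B → Mult A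
  t : B → Mult A
  s_add : ∀ x y : B, s (x + y) = s x + s y
  s_smul : ∀ (c : ℂ) (x : B), s (c • x) = c • s x
  s_mul : ∀ x y : B, s (x * y) = s x * s y
  t_add : ∀ x y : B, t (x + y) = t x + t y
  t_smul : ∀ (c : ℂ) (x : B), t (c • x) = c • t x
  t_mul : ∀ x y : B, t (x * y) = t y * t x
  st_comm : ∀ x y : B, s x * t y = t y * s x
  A_nd : ∀ a : A, (∀ b : A, a * b = 0) → a = 0
  A_idem : Submodule.span ℂ {z : A | ∃ a b : A, z = a * b} = ⊤
  s_faithful : ∀ x : B, (∀ a : A, (s x).L a = 0) → x = 0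
  t_faithful : ∀ x : B, (∀ a : A, (t x).L a = 0) → x = 0
  s_span : Submodule.span ℂ {z : A | ∃ (x : B) (a : A), z = (s x).L a} = ⊤
  t_span : Submodule.span ℂ {z : A | ∃ (x : B) (a : A), z = (t x).L a} = ⊤

section LeftBgd

variable {A B : Type*}
  [NonUnitalRing A] [Module ℂ A] [SMulCommClass ℂ A A] [IsScalarTower ℂ A A]
  [NonUnitalRing B] [Module ℂ B] [SMulCommClass ℂ B B] [IsScalarTower ℂ B B]

/-- The subspace of `A ⊗ A` by which one quotients to obtain `A ⊗̄ A`: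
the span of all `s(x)a ⊗ b − a ⊗ t(x)b`. -/
def BaseData.relB (D : BaseData A B) : Submodule ℂ (A ⊗[ℂ] A) :=
  Submodule.span ℂ
    {z : A ⊗[ℂ] A | ∃ (x : B) (a b : A), z = (D.s x).L a ⊗ₜ[ℂ] b - a ⊗ₜ[ℂ] (D.t x).L b}

/-- Non-degeneracy of `A ⊗̄ A` as a right module over `A ⊗ 1` and over `1 ⊗ A`,
formulated via representatives. -/
def condA3 (D : BaseData A B) : Prop :=
  (∀ u : A ⊗[ℂ] A, (∀ c : A, rmul₁ c u ∈ D.relB) → u ∈ D.relB) ∧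
  (∀ u : A ⊗[ℂ] A, (∀ c : A, rmul₂ c u ∈ D.relB) → u ∈ D.relB)

/-- (L1): `T̃λ(s(x)a⊗b) = T̃λ(a⊗b)(1⊗t(x))` and `T̃ρ(a⊗t(y)b) = T̃ρ(a⊗b)(s(y)⊗1)`. -/
def condL1 (D : BaseData A B) (Tl Tr : A ⊗[ℂ] A →ₗ[ℂ] A ⊗[ℂ] A) : Prop :=
  (∀ (x : B) (a b : A),
      Tl ((D.s x).L a ⊗ₜ[ℂ] b) -
        TensorProduct.map LinearMap.id (D.t x).R (Tl (a ⊗ₜ[ℂ] b)) ∈ D.relB) ∧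
  (∀ (y : B) (a b : A),
      Tr (a ⊗ₜ[ℂ] (D.t y).L b) -
        TensorProduct.map (D.s y).R LinearMap.id (Tr (a ⊗ₜ[ℂ] b)) ∈ D.relB)

/-- (L2λ): `T̃λ(a ⊗ s(x)t(y)b s(x′)t(y′)) = (t(y)⊗s(x))·T̃λ(t(y′)a⊗b)·(1⊗s(x′))`. -/
def condL2lam (D : BaseData A B) (Tl : A ⊗[ℂ] A →ₗ[ℂ] A ⊗[ℂ] A) : Prop :=
  ∀ (a b : A) (x x' y y' : B),
    Tl (a ⊗ₜ[ℂ] ((D.s x).L ((D.t y).L ((D.t y').R ((D.s x').R b))))) -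
      TensorProduct.map (D.t y).L (D.s x).L
        (TensorProduct.map LinearMap.id (D.s x').R (Tl ((D.t y').L a ⊗ₜ[ℂ] b))) ∈ D.relB

/-- (L2ρ): `T̃ρ(s(x)t(y)a s(x′)t(y′) ⊗ b) = (t(y)⊗s(x))·T̃ρ(a⊗s(x′)b)·(t(y′)⊗1)`. -/
def condL2rho (D : BaseData A B) (Tr : A ⊗[ℂ] A →ₗ[ℂ] A ⊗[ℂ] A) : Prop :=
  ∀ (a b : A) (x x' y y' : B),
    Tr (((D.s x).L ((D.t y).L ((D.t y').R ((D.s x').R a)))) ⊗ₜ[ℂ] b) -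
      TensorProduct.map (D.t y).L (D.s x).L
        (TensorProduct.map (D.t y').R LinearMap.id (Tr (a ⊗ₜ[ℂ] (D.s x').L b))) ∈ D.relB

/-- (L3): `T̃λ(a⊗b)·(1⊗c) = T̃ρ(b⊗c)·(a⊗1)`. -/
def condL3 (D : BaseData A B) (Tl Tr : A ⊗[ℂ] A →ₗ[ℂ] A ⊗[ℂ] A) : Prop :=
  ∀ a b c : A, rmul₂ c (Tl (a ⊗ₜ[ℂ] b)) - rmul₁ a (Tr (b ⊗ₜ[ℂ] c)) ∈ D.relB

/-- (L4): `T̃λ(ba⊗c) = T̃λ(b⊗c)·(a⊗1)` and `T̃ρ(a⊗bc) = T̃ρ(a⊗b)·(1⊗c)`. -/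
def condL4 (D : BaseData A B) (Tl Tr : A ⊗[ℂ] A →ₗ[ℂ] A ⊗[ℂ] A) : Prop :=
  (∀ a b c : A, Tl ((b * a) ⊗ₜ[ℂ] c) - rmul₁ a (Tl (b ⊗ₜ[ℂ] c)) ∈ D.relB) ∧
  (∀ a b c : A, Tr (a ⊗ₜ[ℂ] (b * c)) - rmul₂ c (Tr (a ⊗ₜ[ℂ] b)) ∈ D.relB)

/-- (L5λ): whenever `u = Σⱼ uⱼ⊗vⱼ` represents `T̃λ(a⊗c)`, one has
`T̃λ(a ⊗ bc) = Σⱼ T̃λ(uⱼ⊗b)·(1⊗vⱼ)`. -/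
def condL5lam (D : BaseData A B) (Tl : A ⊗[ℂ] A →ₗ[ℂ] A ⊗[ℂ] A) : Prop :=
  ∀ (a b c : A) (u : A ⊗[ℂ] A), u - Tl (a ⊗ₜ[ℂ] c) ∈ D.relB →
    Tl (a ⊗ₜ[ℂ] (b * c)) -
      mulIn23 (TensorProduct.map (Tl ∘ₗ tmulR b) LinearMap.id u) ∈ D.relB

/-- (L5ρ): whenever `u = Σⱼ uⱼ⊗vⱼ` represents `T̃ρ(b⊗c)`, one has
`T̃ρ(ab ⊗ c) = Σⱼ T̃ρ(a⊗vⱼ)·(uⱼ⊗1)`. -/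
def condL5rho (D : BaseData A B) (Tr : A ⊗[ℂ] A →ₗ[ℂ] A ⊗[ℂ] A) : Prop :=
  ∀ (a b c : A) (u : A ⊗[ℂ] A), u - Tr (b ⊗ₜ[ℂ] c) ∈ D.relB →
    Tr ((a * b) ⊗ₜ[ℂ] c) -
      mulIn1 (TensorProduct.map LinearMap.id (Tr ∘ₗ tmulL a) u) ∈ D.relB

/-- The subspace of `A ⊗ A ⊗ A` by which one quotients to obtain the two-sided balanced
triple tensor product: the span of all `s(x)a⊗b⊗c − a⊗t(x)b⊗c` and
`a⊗s(x)b⊗c − a⊗b⊗t(x)c`. -/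
def BaseData.span₃ (D : BaseData A B) : Submodule ℂ (A ⊗[ℂ] (A ⊗[ℂ] A)) :=
  Submodule.span ℂ
    ({w : A ⊗[ℂ] (A ⊗[ℂ] A) | ∃ (x : B) (a b c : A),
        w = (D.s x).L a ⊗ₜ[ℂ] (b ⊗ₜ[ℂ] c) - a ⊗ₜ[ℂ] ((D.t x).L b ⊗ₜ[ℂ] c)} ∪
     {w : A ⊗[ℂ] (A ⊗[ℂ] A) | ∃ (x : B) (a b c : A),
        w = a ⊗ₜ[ℂ] ((D.s x).L b ⊗ₜ[ℂ] c) - a ⊗ₜ[ℂ] (b ⊗ₜ[ℂ] (D.t x).L c)})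

/-- (L6): mixed coassociativity; whenever `u` represents `T̃ρ(b⊗c)` and `p` represents
`T̃λ(a⊗b)`, the elements `Σⱼ T̃λ(a⊗uⱼ)⊗vⱼ` and `Σₖ pₖ⊗T̃ρ(qₖ⊗c)` agree in the
balanced triple tensor product. -/
def condL6 (D : BaseData A B) (Tl Tr : A ⊗[ℂ] A →ₗ[ℂ] A ⊗[ℂ] A) : Prop :=
  ∀ (a b c : A) (u p : A ⊗[ℂ] A), u - Tr (b ⊗ₜ[ℂ] c) ∈ D.relB →
    p - Tl (a ⊗ₜ[ℂ] b) ∈ D.relB →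
    (TensorProduct.assoc ℂ A A A)
        (TensorProduct.map (Tl ∘ₗ tmulL a) LinearMap.id u) -
      TensorProduct.map LinearMap.id (Tr ∘ₗ tmulR c) p ∈ D.span₃

/-- A left multiplier bialgebroid, presented by its canonical maps. -/
def IsLeftBialgebroid (D : BaseData A B) (Tl Tr : A ⊗[ℂ] A →ₗ[ℂ] A ⊗[ℂ] A) : Prop :=
  condA3 D ∧ condL1 D Tl Tr ∧ condL2lam D Tl ∧ condL2rho D Tr ∧ condL3 D Tl Tr ∧
    condL4 D Tl Tr ∧ condL5lam D Tl ∧ condL5rho D Tr ∧ condL6 D Tl Tr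

/-- A left counit for a left multiplier bialgebroid. -/
def IsLeftCounit (D : BaseData A B) (Tl Tr : A ⊗[ℂ] A →ₗ[ℂ] A ⊗[ℂ] A)
    (ε : A →ₗ[ℂ] B) : Prop :=
  (∀ (x : B) (a : A), ε ((D.s x).L a) = x * ε a) ∧
  (∀ (y : B) (a : A), ε ((D.t y).L a) = ε a * y) ∧
  (∀ (a b : A) (n : ℕ) (uu vv : Fin n → A),
      (∑ j, uu j ⊗ₜ[ℂ] vv j) - Tr (a ⊗ₜ[ℂ] b) ∈ D.relB →
      ∑ j, (D.t (ε (uu j))).L (vv j) = a * b) ∧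
  (∀ (a b : A) (n : ℕ) (uu vv : Fin n → A),
      (∑ j, uu j ⊗ₜ[ℂ] vv j) - Tl (a ⊗ₜ[ℂ] b) ∈ D.relB →
      ∑ j, (D.s (ε (vv j))).L (uu j) = a * b)

/-- The domain relation for the canonical map `Tλ`: the span of all
`t(x)a ⊗ b − a ⊗ b·t(x)`. -/
def relLam (D : BaseData A B) : Submodule ℂ (A ⊗[ℂ] A) :=
  Submodule.span ℂ
    {z : A ⊗[ℂ] A | ∃ (x : B) (a b : A), z = (D.t x).L a ⊗ₜ[ℂ] b - a ⊗ₜ[ℂ] (D.t x).R b}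

/-- The domain relation for the canonical map `Tρ`: the span of all
`a·s(x) ⊗ b − a ⊗ s(x)b`. -/
def relRho (D : BaseData A B) : Submodule ℂ (A ⊗[ℂ] A) :=
  Submodule.span ℂ
    {z : A ⊗[ℂ] A | ∃ (x : B) (a b : A), z = (D.s x).R a ⊗ₜ[ℂ] b - a ⊗ₜ[ℂ] (D.s x).L b}

/-- The left ideal `Iˢ ⊆ B`. -/
def IdlS (D : BaseData A B) : Submodule ℂ B :=
  Submodule.span ℂ
    {z : B | ∃ φ : A →ₗ[ℂ] B, (∀ (x : B) (a : A), φ ((D.s x).L a) = x * φ a) ∧ ∃ a, z = φ a}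

/-- The right ideal `Iᵗ ⊆ B`. -/
def IdlT (D : BaseData A B) : Submodule ℂ B :=
  Submodule.span ℂ
    {z : B | ∃ ψ : A →ₗ[ℂ] B, (∀ (x : B) (a : A), ψ ((D.t x).L a) = ψ a * x) ∧ ∃ a, z = ψ a}

/-- The elements witnessing left-fullness. -/
def leftFullSet (D : BaseData A B) (Tr : A ⊗[ℂ] A →ₗ[ℂ] A ⊗[ℂ] A) : Set A :=
  {z : A | ∃ ψ : A →ₗ[ℂ] B, (∀ (x : B) (a : A), ψ ((D.t x).L a) = ψ a * x) ∧
    ∃ (a b : A) (n : ℕ) (uu vv : Fin n → A),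
      (∑ j, uu j ⊗ₜ[ℂ] vv j) - Tr (a ⊗ₜ[ℂ] b) ∈ D.relB ∧
      z = ∑ j, (D.s (ψ (vv j))).L (uu j)}

/-- The elements witnessing right-fullness. -/
def rightFullSet (D : BaseData A B) (Tl : A ⊗[ℂ] A →ₗ[ℂ] A ⊗[ℂ] A) : Set A :=
  {z : A | ∃ φ : A →ₗ[ℂ] B, (∀ (x : B) (a : A), φ ((D.s x).L a) = x * φ a) ∧
    ∃ (a b : A) (n : ℕ) (uu vv : Fin n → A),
      (∑ j, uu j ⊗ₜ[ℂ] vv j) - Tl (a ⊗ₜ[ℂ] b) ∈ D.relB ∧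
      z = ∑ j, (D.t (φ (uu j))).L (vv j)}

section Aux

variable {A B : Type*}
  [NonUnitalRing A] [Module ℂ A] [SMulCommClass ℂ A A] [IsScalarTower ℂ A A]
  [NonUnitalRing B] [Module ℂ B] [SMulCommClass ℂ B B] [IsScalarTower ℂ B B]

lemma apply_mem_of_span {M N : Type*} [AddCommGroup M] [Module ℂ M]
    [AddCommGroup N] [Module ℂ N] (f : M →ₗ[ℂ] N) {S : Set M} {P : Submodule ℂ N}
    (h : ∀ x ∈ S, f x ∈ P) {w : M} (hw : w ∈ Submodule.span ℂ S) : f w ∈ P :=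
  (Submodule.span_le.mpr (fun x hx => (Submodule.mem_comap).2 (h x hx)) :
    Submodule.span ℂ S ≤ P.comap f) hw

variable (D : BaseData A B)

lemma relB_gen (x : B) (a b : A) :
    (D.s x).L a ⊗ₜ[ℂ] b - a ⊗ₜ[ℂ] (D.t x).L b ∈ D.relB :=
  Submodule.subset_span ⟨x, a, b, rfl⟩

lemma span₃_gen1 (x : B) (a b c : A) :
    (D.s x).L a ⊗ₜ[ℂ] (b ⊗ₜ[ℂ] c) - a ⊗ₜ[ℂ] ((D.t x).L b ⊗ₜ[ℂ] c) ∈ D.span₃ :=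
  Submodule.subset_span (Or.inl ⟨x, a, b, c, rfl⟩)

lemma span₃_gen2 (x : B) (a b c : A) :
    a ⊗ₜ[ℂ] ((D.s x).L b ⊗ₜ[ℂ] c) - a ⊗ₜ[ℂ] (b ⊗ₜ[ℂ] (D.t x).L c) ∈ D.span₃ :=
  Submodule.subset_span (Or.inr ⟨x, a, b, c, rfl⟩)

lemma rmul₁_relB (z : A) {w : A ⊗[ℂ] A} (hw : w ∈ D.relB) : rmul₁ z w ∈ D.relB := by
  refine apply_mem_of_span _ ?_ hw
  rintro _ ⟨x, a, b, rfl⟩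
  rw [map_sub]
  simp only [rmul₁, TensorProduct.map_tmul, LinearMap.mulRight_apply, LinearMap.id_coe, id_eq]
  rw [← (D.s x).hL]
  exact relB_gen D x (a * z) b

lemma rmul₂_relB (z : A) {w : A ⊗[ℂ] A} (hw : w ∈ D.relB) : rmul₂ z w ∈ D.relB := by
  refine apply_mem_of_span _ ?_ hw
  rintro _ ⟨x, a, b, rfl⟩
  rw [map_sub]
  simp only [rmul₂, TensorProduct.map_tmul, LinearMap.mulRight_apply, LinearMap.id_coe, id_eq]
  rw [← (D.t x).hL]
  exact relB_gen D x a (b * z)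

lemma mk_span₃ (a : A) {w : A ⊗[ℂ] A} (hw : w ∈ D.relB) :
    (TensorProduct.mk ℂ A (A ⊗[ℂ] A)) a w ∈ D.span₃ := by
  refine apply_mem_of_span _ ?_ hw
  rintro _ ⟨x, α, β, rfl⟩
  rw [map_sub]
  exact span₃_gen2 D x a α β

lemma asc_span₃ (c : A) {w : A ⊗[ℂ] A} (hw : w ∈ D.relB) :
    ((TensorProduct.assoc ℂ A A A).toLinearMap ∘ₗ
      (TensorProduct.mk ℂ (A ⊗[ℂ] A) A).flip c) w ∈ D.span₃ := by
  refine apply_mem_of_span _ ?_ hw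
  rintro _ ⟨x, α, β, rfl⟩
  simp only [LinearMap.comp_apply, map_sub, LinearMap.flip_apply, TensorProduct.mk_apply,
    LinearEquiv.coe_coe, TensorProduct.assoc_tmul]
  exact span₃_gen1 D x α β c

lemma mapR₁_span₃ (r : A) {w : A ⊗[ℂ] (A ⊗[ℂ] A)} (hw : w ∈ D.span₃) :
    TensorProduct.map LinearMap.id (rmul₁ r) w ∈ D.span₃ := by
  refine apply_mem_of_span _ ?_ hw
  rintro _ (⟨x, a, b, c, rfl⟩ | ⟨x, a, b, c, rfl⟩) <;>
    simp only [map_sub, TensorProduct.map_tmul, rmul₁, LinearMap.mulRight_apply,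
      LinearMap.id_coe, id_eq]
  · rw [← (D.t x).hL]
    exact span₃_gen1 D x a (b * r) c
  · rw [← (D.s x).hL]
    exact span₃_gen2 D x a (b * r) c

lemma mapR₂_span₃ (z : A) {w : A ⊗[ℂ] (A ⊗[ℂ] A)} (hw : w ∈ D.span₃) :
    TensorProduct.map LinearMap.id (rmul₂ z) w ∈ D.span₃ := by
  refine apply_mem_of_span _ ?_ hw
  rintro _ (⟨x, a, b, c, rfl⟩ | ⟨x, a, b, c, rfl⟩) <;>
    simp only [map_sub, TensorProduct.map_tmul, rmul₂, LinearMap.mulRight_apply,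
      LinearMap.id_coe, id_eq]
  · exact span₃_gen1 D x a b (c * z)
  · rw [← (D.t x).hL]
    exact span₃_gen2 D x a b (c * z)

end Aux

section Aux2

variable {A B : Type*}
  [NonUnitalRing A] [Module ℂ A] [SMulCommClass ℂ A A] [IsScalarTower ℂ A A]
  [NonUnitalRing B] [Module ℂ B] [SMulCommClass ℂ B B] [IsScalarTower ℂ B B]

@[simp] lemma tmulL_apply (a b : A) : tmulL a b = a ⊗ₜ[ℂ] b := rfl
@[simp] lemma tmulR_apply (a b : A) : tmulR b a = a ⊗ₜ[ℂ] b := rfl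
@[simp] lemma rmul₁_tmul (z a b : A) : rmul₁ z (a ⊗ₜ[ℂ] b) = (a * z) ⊗ₜ[ℂ] b := rfl
@[simp] lemma rmul₂_tmul (z a b : A) : rmul₂ z (a ⊗ₜ[ℂ] b) = a ⊗ₜ[ℂ] (b * z) := rfl

lemma ascFlip_apply (e : A) (w : A ⊗[ℂ] A) :
    ((TensorProduct.assoc ℂ A A A).toLinearMap ∘ₗ
      (TensorProduct.mk ℂ (A ⊗[ℂ] A) A).flip e) w =
    (TensorProduct.assoc ℂ A A A) (w ⊗ₜ[ℂ] e) := rfl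

lemma mulIn1_tmul (r : A) (w : A ⊗[ℂ] A) : mulIn1 (r ⊗ₜ[ℂ] w) = rmul₁ r w := by
  induction w using TensorProduct.induction_on with
  | zero => simp [mulIn1]
  | tmul x y => simp [mulIn1, rmul₁, TensorProduct.leftComm]
  | add x y hx hy => rw [TensorProduct.tmul_add, map_add, hx, hy, map_add]

lemma mulIn23_tmul (v : A) (w : A ⊗[ℂ] A) : mulIn23 (w ⊗ₜ[ℂ] v) = rmul₂ v w := by
  induction w using TensorProduct.induction_on with
  | zero => simp [mulIn23]
  | tmul x y => simp [mulIn23, rmul₂]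
  | add x y hx hy => rw [TensorProduct.add_tmul, map_add, hx, hy, map_add]

lemma asc_rmul (r e : A) (w : A ⊗[ℂ] A) :
    TensorProduct.map LinearMap.id (rmul₁ r) ((TensorProduct.assoc ℂ A A A) (w ⊗ₜ[ℂ] e)) =
    (TensorProduct.assoc ℂ A A A) ((rmul₂ r w) ⊗ₜ[ℂ] e) := by
  induction w using TensorProduct.induction_on with
  | zero => simp
  | tmul x y => simp
  | add x y hx hy =>
    rw [TensorProduct.add_tmul, map_add, map_add, hx, hy, map_add, TensorProduct.add_tmul,
      map_add]

variable (D : BaseData A B) (Tl Tr : A ⊗[ℂ] A →ₗ[ℂ] A ⊗[ℂ] A)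

/-- Key lemma 1, derived from (L6): `u ⊗ v ↦ u ⊗ T̃ρ(v ⊗ c)` maps `relB` into `span₃`. -/
lemma K1 (hL6 : condL6 D Tl Tr) (c : A) {w : A ⊗[ℂ] A} (hw : w ∈ D.relB) :
    TensorProduct.map LinearMap.id (Tr ∘ₗ tmulR c) w ∈ D.span₃ := by
  have h := hL6 0 0 c 0 w (by simp) (by simpa using hw)
  simpa using neg_mem h

/-- Key lemma 2, derived from (L6): `u ⊗ v ↦ T̃λ(a ⊗ u) ⊗₁₂ v` maps `relB` into `span₃`. -/
lemma K2 (hL6 : condL6 D Tl Tr) (a : A) {w : A ⊗[ℂ] A} (hw : w ∈ D.relB) :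
    (TensorProduct.assoc ℂ A A A)
      (TensorProduct.map (Tl ∘ₗ tmulL a) LinearMap.id w) ∈ D.span₃ := by
  have h := hL6 a 0 0 w 0 (by simpa using hw) (by simp)
  simpa using h

end Aux2

section Aux3

variable {A B : Type*}
  [NonUnitalRing A] [Module ℂ A] [SMulCommClass ℂ A A] [IsScalarTower ℂ A A]
  [NonUnitalRing B] [Module ℂ B] [SMulCommClass ℂ B B] [IsScalarTower ℂ B B]
  (D : BaseData A B) (Tl Tr : A ⊗[ℂ] A →ₗ[ℂ] A ⊗[ℂ] A)

lemma sub_mem_trans {M : Type*} [AddCommGroup M] [Module ℂ M] {P : Submodule ℂ M}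
    {x y z : M} (h1 : x - y ∈ P) (h2 : y - z ∈ P) : x - z ∈ P := by
  have := add_mem h1 h2; simpa using this

lemma sub_mem_symm {M : Type*} [AddCommGroup M] [Module ℂ M] {P : Submodule ℂ M}
    {x y : M} (h1 : x - y ∈ P) : y - x ∈ P := by
  simpa using neg_mem h1

set_option maxHeartbeats 1000000 in
lemma pentRho (hL3 : condL3 D Tl Tr) (hL5r : condL5rho D Tr) (hL6 : condL6 D Tl Tr)
    (hQ1 : ∀ u : A ⊗[ℂ] (A ⊗[ℂ] A),
      (∀ c : A, TensorProduct.map (LinearMap.mulRight ℂ c)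
        (LinearMap.id : A ⊗[ℂ] A →ₗ[ℂ] A ⊗[ℂ] A) u ∈ D.span₃) → u ∈ D.span₃) :
    ∀ (a b c : A) (n : ℕ) (uu vv : Fin n → A) (m : Fin n → ℕ)
        (pp qq : (j : Fin n) → Fin (m j) → A)
        (nl : ℕ) (rr ss : Fin nl → A) (ml : Fin nl → ℕ)
        (dd ee : (l : Fin nl) → Fin (ml l) → A)
        (mk2 : (l : Fin nl) → Fin (ml l) → ℕ)
        (ff gg : (l : Fin nl) → (m' : Fin (ml l)) → Fin (mk2 l m') → A),
      (∑ j, uu j ⊗ₜ[ℂ] vv j) - Tr (a ⊗ₜ[ℂ] b) ∈ D.relB →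
      (∀ j, (∑ k, pp j k ⊗ₜ[ℂ] qq j k) - Tr (vv j ⊗ₜ[ℂ] c) ∈ D.relB) →
      (∑ l, rr l ⊗ₜ[ℂ] ss l) - Tr (b ⊗ₜ[ℂ] c) ∈ D.relB →
      (∀ l, (∑ m', dd l m' ⊗ₜ[ℂ] ee l m') - Tr (a ⊗ₜ[ℂ] ss l) ∈ D.relB) →
      (∀ l m', (∑ n', ff l m' n' ⊗ₜ[ℂ] gg l m' n') - Tr (dd l m' ⊗ₜ[ℂ] rr l) ∈ D.relB) →
      (∑ j, ∑ k, uu j ⊗ₜ[ℂ] (pp j k ⊗ₜ[ℂ] qq j k)) -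
        (∑ l, ∑ m', ∑ n', ff l m' n' ⊗ₜ[ℂ] (gg l m' n' ⊗ₜ[ℂ] ee l m')) ∈ D.span₃ := by
  intro a b c n uu vv m pp qq nl rr ss ml dd ee mk2 ff gg hU hP hRs hD hF
  refine hQ1 _ fun z => ?_
  rw [map_sub]
  have eX : TensorProduct.map (LinearMap.mulRight ℂ z)
      (LinearMap.id : A ⊗[ℂ] A →ₗ[ℂ] A ⊗[ℂ] A)
      (∑ j, ∑ k, uu j ⊗ₜ[ℂ] (pp j k ⊗ₜ[ℂ] qq j k)) =
      ∑ j, ∑ k, (uu j * z) ⊗ₜ[ℂ] (pp j k ⊗ₜ[ℂ] qq j k) := by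
    simp [map_sum]
  have eY : TensorProduct.map (LinearMap.mulRight ℂ z)
      (LinearMap.id : A ⊗[ℂ] A →ₗ[ℂ] A ⊗[ℂ] A)
      (∑ l, ∑ m', ∑ n', ff l m' n' ⊗ₜ[ℂ] (gg l m' n' ⊗ₜ[ℂ] ee l m')) =
      ∑ l, ∑ m', ∑ n', (ff l m' n' * z) ⊗ₜ[ℂ] (gg l m' n' ⊗ₜ[ℂ] ee l m') := by
    simp [map_sum]
  rw [eX, eY]
  -- step 1
  have e1 : (∑ j, ∑ k, (uu j * z) ⊗ₜ[ℂ] (pp j k ⊗ₜ[ℂ] qq j k)) -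
      TensorProduct.map LinearMap.id (Tr ∘ₗ tmulR c)
        (rmul₁ z (∑ j, uu j ⊗ₜ[ℂ] vv j)) ∈ D.span₃ := by
    have e : TensorProduct.map LinearMap.id (Tr ∘ₗ tmulR c)
        (rmul₁ z (∑ j, uu j ⊗ₜ[ℂ] vv j)) =
        ∑ j, (uu j * z) ⊗ₜ[ℂ] Tr (vv j ⊗ₜ[ℂ] c) := by
      simp [map_sum]
    rw [e, ← Finset.sum_sub_distrib]
    refine sum_mem fun j _ => ?_
    have e' : (∑ k, (uu j * z) ⊗ₜ[ℂ] (pp j k ⊗ₜ[ℂ] qq j k)) -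
        (uu j * z) ⊗ₜ[ℂ] Tr (vv j ⊗ₜ[ℂ] c) =
        (TensorProduct.mk ℂ A (A ⊗[ℂ] A)) (uu j * z)
          ((∑ k, pp j k ⊗ₜ[ℂ] qq j k) - Tr (vv j ⊗ₜ[ℂ] c)) := by
      simp [TensorProduct.tmul_sub, TensorProduct.tmul_sum]
    rw [e']
    exact mk_span₃ D _ (hP j)
  -- step 2 : replace the representative by Tr (a ⊗ b)
  have e2 : TensorProduct.map LinearMap.id (Tr ∘ₗ tmulR c)
        (rmul₁ z (∑ j, uu j ⊗ₜ[ℂ] vv j)) -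
      TensorProduct.map LinearMap.id (Tr ∘ₗ tmulR c)
        (rmul₁ z (Tr (a ⊗ₜ[ℂ] b))) ∈ D.span₃ := by
    rw [← map_sub, ← map_sub]
    exact K1 D Tl Tr hL6 c (rmul₁_relB D z hU)
  -- step 3 : use (L3)
  have e3 : TensorProduct.map LinearMap.id (Tr ∘ₗ tmulR c)
        (rmul₁ z (Tr (a ⊗ₜ[ℂ] b))) -
      TensorProduct.map LinearMap.id (Tr ∘ₗ tmulR c)
        (rmul₂ b (Tl (z ⊗ₜ[ℂ] a))) ∈ D.span₃ := by
    rw [← map_sub]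
    exact K1 D Tl Tr hL6 c (sub_mem_symm (hL3 z a b))
  -- step 4 : use (L5ρ), pointwise in the representative of Tl (z ⊗ a)
  have e4 : ∀ w : A ⊗[ℂ] A,
      TensorProduct.map LinearMap.id (Tr ∘ₗ tmulR c) (rmul₂ b w) -
      ∑ l, TensorProduct.map LinearMap.id (rmul₁ (rr l))
        (TensorProduct.map LinearMap.id (Tr ∘ₗ tmulR (ss l)) w) ∈ D.span₃ := by
    intro w
    induction w using TensorProduct.induction_on with
    | zero => simp
    | tmul α β =>
      have h5 := hL5r β b c (∑ l, rr l ⊗ₜ[ℂ] ss l) hRs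
      have hm : mulIn1 (TensorProduct.map LinearMap.id (Tr ∘ₗ tmulL β)
          (∑ l, rr l ⊗ₜ[ℂ] ss l)) = ∑ l, rmul₁ (rr l) (Tr (β ⊗ₜ[ℂ] ss l)) := by
        rw [map_sum, map_sum]
        refine Finset.sum_congr rfl fun l _ => ?_
        simp [mulIn1_tmul]
      rw [hm] at h5
      have h5' := mk_span₃ D α h5
      simp only [map_sub, TensorProduct.mk_apply, TensorProduct.tmul_sum] at h5'
      have g1 : TensorProduct.map LinearMap.id (Tr ∘ₗ tmulR c) (rmul₂ b (α ⊗ₜ[ℂ] β)) =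
          α ⊗ₜ[ℂ] Tr ((β * b) ⊗ₜ[ℂ] c) := by
        simp
      have g2 : ∀ l, TensorProduct.map LinearMap.id (rmul₁ (rr l))
          (TensorProduct.map LinearMap.id (Tr ∘ₗ tmulR (ss l)) (α ⊗ₜ[ℂ] β)) =
          α ⊗ₜ[ℂ] rmul₁ (rr l) (Tr (β ⊗ₜ[ℂ] ss l)) := by
        intro l; simp
      rw [g1]
      rw [Finset.sum_congr rfl fun l _ => g2 l]
      exact h5'
    | add x y hx hy =>
      simp only [map_add, Finset.sum_add_distrib]
      convert add_mem hx hy using 1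
      abel
  -- step 5 : use (L6) with u := ∑ dd ⊗ ee
  have e5 : ∀ l : Fin nl,
      TensorProduct.map LinearMap.id (rmul₁ (rr l))
        (TensorProduct.map LinearMap.id (Tr ∘ₗ tmulR (ss l)) (Tl (z ⊗ₜ[ℂ] a))) -
      TensorProduct.map LinearMap.id (rmul₁ (rr l))
        ((TensorProduct.assoc ℂ A A A)
          (TensorProduct.map (Tl ∘ₗ tmulL z) LinearMap.id
            (∑ m', dd l m' ⊗ₜ[ℂ] ee l m'))) ∈ D.span₃ := by
    intro l
    rw [← map_sub]
    refine mapR₁_span₃ D _ ?_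
    exact sub_mem_symm (hL6 z a (ss l) (∑ m', dd l m' ⊗ₜ[ℂ] ee l m') (Tl (z ⊗ₜ[ℂ] a))
      (hD l) (by simp))
  -- the crucial identity matching both sides
  have e8 : ∀ l : Fin nl,
      TensorProduct.map LinearMap.id (rmul₁ (rr l))
        ((TensorProduct.assoc ℂ A A A)
          (TensorProduct.map (Tl ∘ₗ tmulL z) LinearMap.id
            (∑ m', dd l m' ⊗ₜ[ℂ] ee l m'))) =
      ∑ m', (TensorProduct.assoc ℂ A A A)
          ((rmul₂ (rr l) (Tl (z ⊗ₜ[ℂ] dd l m'))) ⊗ₜ[ℂ] ee l m') := by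
    intro l
    rw [map_sum, map_sum, map_sum]
    refine Finset.sum_congr rfl fun m' _ => ?_
    have : TensorProduct.map (Tl ∘ₗ tmulL z) LinearMap.id (dd l m' ⊗ₜ[ℂ] ee l m') =
        Tl (z ⊗ₜ[ℂ] dd l m') ⊗ₜ[ℂ] ee l m' := by simp
    rw [this, asc_rmul]
  -- right-hand side rewriting
  have e6 : (∑ l, ∑ m', (TensorProduct.assoc ℂ A A A)
        ((rmul₁ z (Tr (dd l m' ⊗ₜ[ℂ] rr l))) ⊗ₜ[ℂ] ee l m')) -
      (∑ l, ∑ m', ∑ n', (ff l m' n' * z) ⊗ₜ[ℂ] (gg l m' n' ⊗ₜ[ℂ] ee l m')) ∈ D.span₃ := by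
    rw [← Finset.sum_sub_distrib]
    refine sum_mem fun l _ => ?_
    rw [← Finset.sum_sub_distrib]
    refine sum_mem fun m' _ => ?_
    have e : (∑ n', (ff l m' n' * z) ⊗ₜ[ℂ] (gg l m' n' ⊗ₜ[ℂ] ee l m')) =
        ((TensorProduct.assoc ℂ A A A).toLinearMap ∘ₗ
          (TensorProduct.mk ℂ (A ⊗[ℂ] A) A).flip (ee l m'))
            (rmul₁ z (∑ n', ff l m' n' ⊗ₜ[ℂ] gg l m' n')) := by
      simp [map_sum, ascFlip_apply]
    rw [e, ← ascFlip_apply, ← map_sub, ← map_sub]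
    exact asc_span₃ D _ (rmul₁_relB D z (sub_mem_symm (hF l m')))
  have e7 : ∀ l m', (TensorProduct.assoc ℂ A A A)
        ((rmul₂ (rr l) (Tl (z ⊗ₜ[ℂ] dd l m'))) ⊗ₜ[ℂ] ee l m') -
      (TensorProduct.assoc ℂ A A A)
        ((rmul₁ z (Tr (dd l m' ⊗ₜ[ℂ] rr l))) ⊗ₜ[ℂ] ee l m') ∈ D.span₃ := by
    intro l m'
    rw [← ascFlip_apply, ← ascFlip_apply, ← map_sub]
    exact asc_span₃ D _ (hL3 z (dd l m') (rr l))
  -- assemble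
  refine sub_mem_trans e1 (sub_mem_trans e2 (sub_mem_trans e3
    (sub_mem_trans (e4 (Tl (z ⊗ₜ[ℂ] a))) ?_)))
  have eS : (∑ l, TensorProduct.map LinearMap.id (rmul₁ (rr l))
        (TensorProduct.map LinearMap.id (Tr ∘ₗ tmulR (ss l)) (Tl (z ⊗ₜ[ℂ] a)))) -
      (∑ l, ∑ m', (TensorProduct.assoc ℂ A A A)
        ((rmul₂ (rr l) (Tl (z ⊗ₜ[ℂ] dd l m'))) ⊗ₜ[ℂ] ee l m')) ∈ D.span₃ := by
    rw [← Finset.sum_sub_distrib]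
    refine sum_mem fun l _ => ?_
    rw [← e8 l]
    exact e5 l
  refine sub_mem_trans eS (sub_mem_trans ?_ e6)
  rw [← Finset.sum_sub_distrib]
  refine sum_mem fun l _ => ?_
  rw [← Finset.sum_sub_distrib]
  exact sum_mem fun m' _ => e7 l m'

lemma mapR₂_asc (z v : A) (w : A ⊗[ℂ] A) :
    TensorProduct.map LinearMap.id (rmul₂ z) ((TensorProduct.assoc ℂ A A A) (w ⊗ₜ[ℂ] v)) =
    (TensorProduct.assoc ℂ A A A) (w ⊗ₜ[ℂ] (v * z)) := by
  induction w using TensorProduct.induction_on with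
  | zero => simp
  | tmul x y => simp
  | add x y hx hy =>
    rw [TensorProduct.add_tmul, map_add, map_add, hx, hy, TensorProduct.add_tmul, map_add]

set_option maxHeartbeats 1000000 in
lemma pentLam (hL3 : condL3 D Tl Tr) (hL5l : condL5lam D Tl) (hL6 : condL6 D Tl Tr)
    (hQ3 : ∀ u : A ⊗[ℂ] (A ⊗[ℂ] A),
      (∀ c : A, TensorProduct.map (LinearMap.id : A →ₗ[ℂ] A)
        (TensorProduct.map LinearMap.id (LinearMap.mulRight ℂ c)) u ∈ D.span₃) →
      u ∈ D.span₃) :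
    ∀ (a b c : A) (n : ℕ) (uu vv : Fin n → A)
        (nl : ℕ) (rr ss : Fin nl → A) (ml : Fin nl → ℕ)
        (dd ee : (l : Fin nl) → Fin (ml l) → A)
        (mk2 : (l : Fin nl) → Fin (ml l) → ℕ)
        (ff gg : (l : Fin nl) → (m' : Fin (ml l)) → Fin (mk2 l m') → A),
      (∑ j, uu j ⊗ₜ[ℂ] vv j) - Tl (b ⊗ₜ[ℂ] c) ∈ D.relB →
      (∑ l, rr l ⊗ₜ[ℂ] ss l) - Tl (a ⊗ₜ[ℂ] b) ∈ D.relB →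
      (∀ l, (∑ m', dd l m' ⊗ₜ[ℂ] ee l m') - Tl (rr l ⊗ₜ[ℂ] c) ∈ D.relB) →
      (∀ l m', (∑ n', ff l m' n' ⊗ₜ[ℂ] gg l m' n') - Tl (ss l ⊗ₜ[ℂ] ee l m') ∈ D.relB) →
      (∑ j, (TensorProduct.assoc ℂ A A A) (Tl (a ⊗ₜ[ℂ] uu j) ⊗ₜ[ℂ] vv j)) -
        (∑ l, ∑ m', ∑ n', dd l m' ⊗ₜ[ℂ] (ff l m' n' ⊗ₜ[ℂ] gg l m' n')) ∈ D.span₃ := by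
  intro a b c n uu vv nl rr ss ml dd ee mk2 ff gg hU hRs hD hF
  refine hQ3 _ fun z => ?_
  rw [map_sub]
  have eX : TensorProduct.map (LinearMap.id : A →ₗ[ℂ] A)
      (TensorProduct.map LinearMap.id (LinearMap.mulRight ℂ z))
      (∑ j, (TensorProduct.assoc ℂ A A A) (Tl (a ⊗ₜ[ℂ] uu j) ⊗ₜ[ℂ] vv j)) =
      (TensorProduct.assoc ℂ A A A)
        (TensorProduct.map (Tl ∘ₗ tmulL a) LinearMap.id
          (rmul₂ z (∑ j, uu j ⊗ₜ[ℂ] vv j))) := by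
    rw [map_sum, map_sum, map_sum, map_sum]
    refine Finset.sum_congr rfl fun j _ => ?_
    show TensorProduct.map LinearMap.id (rmul₂ z)
      ((TensorProduct.assoc ℂ A A A) (Tl (a ⊗ₜ[ℂ] uu j) ⊗ₜ[ℂ] vv j)) = _
    rw [mapR₂_asc]
    simp
  have eY : TensorProduct.map (LinearMap.id : A →ₗ[ℂ] A)
      (TensorProduct.map LinearMap.id (LinearMap.mulRight ℂ z))
      (∑ l, ∑ m', ∑ n', dd l m' ⊗ₜ[ℂ] (ff l m' n' ⊗ₜ[ℂ] gg l m' n')) =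
      ∑ l, ∑ m', ∑ n', dd l m' ⊗ₜ[ℂ] (ff l m' n' ⊗ₜ[ℂ] (gg l m' n' * z)) := by
    simp [map_sum]
  rw [eX, eY]
  -- step 2 : replace the representative by Tl (b ⊗ c)
  have e2 : (TensorProduct.assoc ℂ A A A)
        (TensorProduct.map (Tl ∘ₗ tmulL a) LinearMap.id
          (rmul₂ z (∑ j, uu j ⊗ₜ[ℂ] vv j))) -
      (TensorProduct.assoc ℂ A A A)
        (TensorProduct.map (Tl ∘ₗ tmulL a) LinearMap.id
          (rmul₂ z (Tl (b ⊗ₜ[ℂ] c)))) ∈ D.span₃ := by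
    rw [← map_sub, ← map_sub, ← map_sub]
    exact K2 D Tl Tr hL6 a (rmul₂_relB D z hU)
  -- step 3 : use (L3)
  have e3 : (TensorProduct.assoc ℂ A A A)
        (TensorProduct.map (Tl ∘ₗ tmulL a) LinearMap.id
          (rmul₂ z (Tl (b ⊗ₜ[ℂ] c)))) -
      (TensorProduct.assoc ℂ A A A)
        (TensorProduct.map (Tl ∘ₗ tmulL a) LinearMap.id
          (rmul₁ b (Tr (c ⊗ₜ[ℂ] z)))) ∈ D.span₃ := by
    rw [← map_sub, ← map_sub]
    exact K2 D Tl Tr hL6 a (hL3 b c z)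
  -- step 4 : use (L5λ), pointwise
  have e4 : ∀ w : A ⊗[ℂ] A,
      (TensorProduct.assoc ℂ A A A)
        (TensorProduct.map (Tl ∘ₗ tmulL a) LinearMap.id (rmul₁ b w)) -
      ∑ l, TensorProduct.map LinearMap.id (rmul₁ (ss l))
        ((TensorProduct.assoc ℂ A A A)
          (TensorProduct.map (Tl ∘ₗ tmulL (rr l)) LinearMap.id w)) ∈ D.span₃ := by
    intro w
    induction w using TensorProduct.induction_on with
    | zero => simp
    | tmul α β =>
      have h5 := hL5l a α b (∑ l, rr l ⊗ₜ[ℂ] ss l) hRs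
      have hm : mulIn23 (TensorProduct.map (Tl ∘ₗ tmulR α) LinearMap.id
          (∑ l, rr l ⊗ₜ[ℂ] ss l)) = ∑ l, rmul₂ (ss l) (Tl (rr l ⊗ₜ[ℂ] α)) := by
        rw [map_sum, map_sum]
        refine Finset.sum_congr rfl fun l _ => ?_
        simp [mulIn23_tmul]
      rw [hm] at h5
      have h5' := asc_span₃ D β h5
      rw [ascFlip_apply, TensorProduct.sub_tmul, map_sub] at h5'
      have hsum : (TensorProduct.assoc ℂ A A A)
          ((∑ l, rmul₂ (ss l) (Tl (rr l ⊗ₜ[ℂ] α))) ⊗ₜ[ℂ] β) =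
          ∑ l, (TensorProduct.assoc ℂ A A A)
            ((rmul₂ (ss l) (Tl (rr l ⊗ₜ[ℂ] α))) ⊗ₜ[ℂ] β) := by
        rw [TensorProduct.sum_tmul, map_sum]
      rw [hsum] at h5'
      have g1 : (TensorProduct.assoc ℂ A A A)
          (TensorProduct.map (Tl ∘ₗ tmulL a) LinearMap.id (rmul₁ b (α ⊗ₜ[ℂ] β))) =
          (TensorProduct.assoc ℂ A A A) (Tl (a ⊗ₜ[ℂ] (α * b)) ⊗ₜ[ℂ] β) := by
        simp
      have g2 : ∀ l, TensorProduct.map LinearMap.id (rmul₁ (ss l))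
          ((TensorProduct.assoc ℂ A A A)
            (TensorProduct.map (Tl ∘ₗ tmulL (rr l)) LinearMap.id (α ⊗ₜ[ℂ] β))) =
          (TensorProduct.assoc ℂ A A A)
            ((rmul₂ (ss l) (Tl (rr l ⊗ₜ[ℂ] α))) ⊗ₜ[ℂ] β) := by
        intro l
        have : TensorProduct.map (Tl ∘ₗ tmulL (rr l)) LinearMap.id (α ⊗ₜ[ℂ] β) =
            Tl (rr l ⊗ₜ[ℂ] α) ⊗ₜ[ℂ] β := by simp
        rw [this, asc_rmul]
      rw [g1, Finset.sum_congr rfl fun l _ => g2 l]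
      exact h5'
    | add x y hx hy =>
      simp only [map_add, Finset.sum_add_distrib]
      convert add_mem hx hy using 1
      abel
  -- step 5 : use (L6) with p := ∑ dd ⊗ ee
  have e5 : ∀ l : Fin nl,
      TensorProduct.map LinearMap.id (rmul₁ (ss l))
        ((TensorProduct.assoc ℂ A A A)
          (TensorProduct.map (Tl ∘ₗ tmulL (rr l)) LinearMap.id (Tr (c ⊗ₜ[ℂ] z)))) -
      TensorProduct.map LinearMap.id (rmul₁ (ss l))
        (TensorProduct.map LinearMap.id (Tr ∘ₗ tmulR z)
          (∑ m', dd l m' ⊗ₜ[ℂ] ee l m')) ∈ D.span₃ := by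
    intro l
    rw [← map_sub]
    exact mapR₁_span₃ D _ (hL6 (rr l) c z (Tr (c ⊗ₜ[ℂ] z))
      (∑ m', dd l m' ⊗ₜ[ℂ] ee l m') (by simp) (hD l))
  have e8 : ∀ l : Fin nl,
      TensorProduct.map LinearMap.id (rmul₁ (ss l))
        (TensorProduct.map LinearMap.id (Tr ∘ₗ tmulR z)
          (∑ m', dd l m' ⊗ₜ[ℂ] ee l m')) =
      ∑ m', dd l m' ⊗ₜ[ℂ] rmul₁ (ss l) (Tr (ee l m' ⊗ₜ[ℂ] z)) := by
    intro l
    rw [map_sum, map_sum]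
    exact Finset.sum_congr rfl fun m' _ => by simp
  -- right-hand side rewriting
  have e6 : (∑ l, ∑ m', dd l m' ⊗ₜ[ℂ] rmul₁ (ss l) (Tr (ee l m' ⊗ₜ[ℂ] z))) -
      (∑ l, ∑ m', ∑ n', dd l m' ⊗ₜ[ℂ] (ff l m' n' ⊗ₜ[ℂ] (gg l m' n' * z))) ∈ D.span₃ := by
    rw [← Finset.sum_sub_distrib]
    refine sum_mem fun l _ => ?_
    rw [← Finset.sum_sub_distrib]
    refine sum_mem fun m' _ => ?_
    have e : (∑ n', dd l m' ⊗ₜ[ℂ] (ff l m' n' ⊗ₜ[ℂ] (gg l m' n' * z))) =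
        (TensorProduct.mk ℂ A (A ⊗[ℂ] A)) (dd l m')
          (rmul₂ z (∑ n', ff l m' n' ⊗ₜ[ℂ] gg l m' n')) := by
      simp [map_sum, TensorProduct.tmul_sum]
    rw [e]
    have h1 : rmul₁ (ss l) (Tr (ee l m' ⊗ₜ[ℂ] z)) -
        rmul₂ z (Tl (ss l ⊗ₜ[ℂ] ee l m')) ∈ D.relB :=
      sub_mem_symm (hL3 (ss l) (ee l m') z)
    have h2 : rmul₂ z (Tl (ss l ⊗ₜ[ℂ] ee l m')) -
        rmul₂ z (∑ n', ff l m' n' ⊗ₜ[ℂ] gg l m' n') ∈ D.relB := by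
      have := rmul₂_relB D z (sub_mem_symm (hF l m'))
      rwa [map_sub] at this
    have := mk_span₃ D (dd l m') (sub_mem_trans h1 h2)
    rw [map_sub] at this
    exact this
  -- assemble
  refine sub_mem_trans e2 (sub_mem_trans e3
    (sub_mem_trans (e4 (Tr (c ⊗ₜ[ℂ] z))) (sub_mem_trans ?_ e6)))
  rw [← Finset.sum_sub_distrib]
  refine sum_mem fun l _ => ?_
  rw [← e8 l]
  exact e5 l

end Aux3

/-- the pentagon equations for the canonical maps, under non-degeneracy of the
balanced triple tensor product in the first and third legs. -/
theorem stmt5 (D : BaseData A B) (Tl Tr : A ⊗[ℂ] A →ₗ[ℂ] A ⊗[ℂ] A)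
    (h : IsLeftBialgebroid D Tl Tr)
    (hQ1 : ∀ u : A ⊗[ℂ] (A ⊗[ℂ] A),
      (∀ c : A, TensorProduct.map (LinearMap.mulRight ℂ c)
        (LinearMap.id : A ⊗[ℂ] A →ₗ[ℂ] A ⊗[ℂ] A) u ∈ D.span₃) → u ∈ D.span₃)
    (hQ3 : ∀ u : A ⊗[ℂ] (A ⊗[ℂ] A),
      (∀ c : A, TensorProduct.map (LinearMap.id : A →ₗ[ℂ] A)
        (TensorProduct.map LinearMap.id (LinearMap.mulRight ℂ c)) u ∈ D.span₃) →
      u ∈ D.span₃) :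
    (∀ (a b c : A) (n : ℕ) (uu vv : Fin n → A) (m : Fin n → ℕ)
        (pp qq : (j : Fin n) → Fin (m j) → A)
        (nl : ℕ) (rr ss : Fin nl → A) (ml : Fin nl → ℕ)
        (dd ee : (l : Fin nl) → Fin (ml l) → A)
        (mk2 : (l : Fin nl) → Fin (ml l) → ℕ)
        (ff gg : (l : Fin nl) → (m' : Fin (ml l)) → Fin (mk2 l m') → A),
      (∑ j, uu j ⊗ₜ[ℂ] vv j) - Tr (a ⊗ₜ[ℂ] b) ∈ D.relB →
      (∀ j, (∑ k, pp j k ⊗ₜ[ℂ] qq j k) - Tr (vv j ⊗ₜ[ℂ] c) ∈ D.relB) →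
      (∑ l, rr l ⊗ₜ[ℂ] ss l) - Tr (b ⊗ₜ[ℂ] c) ∈ D.relB →
      (∀ l, (∑ m', dd l m' ⊗ₜ[ℂ] ee l m') - Tr (a ⊗ₜ[ℂ] ss l) ∈ D.relB) →
      (∀ l m', (∑ n', ff l m' n' ⊗ₜ[ℂ] gg l m' n') - Tr (dd l m' ⊗ₜ[ℂ] rr l) ∈ D.relB) →
      (∑ j, ∑ k, uu j ⊗ₜ[ℂ] (pp j k ⊗ₜ[ℂ] qq j k)) -
        (∑ l, ∑ m', ∑ n', ff l m' n' ⊗ₜ[ℂ] (gg l m' n' ⊗ₜ[ℂ] ee l m')) ∈ D.span₃) ∧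
    (∀ (a b c : A) (n : ℕ) (uu vv : Fin n → A)
        (nl : ℕ) (rr ss : Fin nl → A) (ml : Fin nl → ℕ)
        (dd ee : (l : Fin nl) → Fin (ml l) → A)
        (mk2 : (l : Fin nl) → Fin (ml l) → ℕ)
        (ff gg : (l : Fin nl) → (m' : Fin (ml l)) → Fin (mk2 l m') → A),
      (∑ j, uu j ⊗ₜ[ℂ] vv j) - Tl (b ⊗ₜ[ℂ] c) ∈ D.relB →
      (∑ l, rr l ⊗ₜ[ℂ] ss l) - Tl (a ⊗ₜ[ℂ] b) ∈ D.relB →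
      (∀ l, (∑ m', dd l m' ⊗ₜ[ℂ] ee l m') - Tl (rr l ⊗ₜ[ℂ] c) ∈ D.relB) →
      (∀ l m', (∑ n', ff l m' n' ⊗ₜ[ℂ] gg l m' n') - Tl (ss l ⊗ₜ[ℂ] ee l m') ∈ D.relB) →
      (∑ j, (TensorProduct.assoc ℂ A A A) (Tl (a ⊗ₜ[ℂ] uu j) ⊗ₜ[ℂ] vv j)) -
        (∑ l, ∑ m', ∑ n', dd l m' ⊗ₜ[ℂ] (ff l m' n' ⊗ₜ[ℂ] gg l m' n')) ∈ D.span₃) := by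
  obtain ⟨-, -, -, -, hL3, -, hL5l, hL5r, hL6⟩ := h
  exact ⟨pentRho D Tl Tr hL3 hL5r hL6 hQ1, pentLam D Tl Tr hL3 hL5l hL6 hQ3⟩

end LeftBgd
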